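/- Let R satisfy (H1), fix n ≥ 1, u_1,…,u_n ∈ ℝᵈ, and a ∈ ℝ₊ᵈ. Let (y^{(a)}, z^{(a)}) solve SP({a+Σu_k}, R), and let (v, w) solve SP({Σ_{ℓ≤k} û_ℓ}, R⁻¹) where û_k := −R⁻¹u_{n+1−k}. If Δy_n^{(a)} ≫ 0, then w_k ≫ 0 for all 1 ≤ k ≤ n (so the boundary hitting time σ_bd > n) and w_n ≫ R⁻¹a. -/
import Mathlib

open Matrix Finset MeasureTheory ProbabilityTheory

noncomputable section

/-- A pair `(ξ, ζ)` solves the linear complementarity problem `LCP(η, M)`. -/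
def IsLCPSol {d : ℕ} (M : Matrix (Fin d) (Fin d) ℝ) (η ξ ζ : Fin d → ℝ) : Prop :=
  ζ = η + M *ᵥ ξ ∧ (∀ i, 0 ≤ ξ i) ∧ (∀ i, 0 ≤ ζ i) ∧ ξ ⬝ᵥ ζ = 0

/-- `(y, z)` solves the Skorokhod problem `SP({a + Σ u_n}, M)` in the orthant. -/
def IsSPSol {d : ℕ} (M : Matrix (Fin d) (Fin d) ℝ) (a : Fin d → ℝ)
    (u y z : ℕ → Fin d → ℝ) : Prop :=
  y 0 = 0 ∧ z 0 = a ∧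
  ∀ n, 1 ≤ n →
    z n = z (n - 1) + u n + M *ᵥ (y n - y (n - 1)) ∧
    (∀ i, 0 ≤ z n i) ∧ (∀ i, 0 ≤ y n i - y (n - 1) i) ∧
    z n ⬝ᵥ (y n - y (n - 1)) = 0

section Stmt9Aux

attribute [local instance] Matrix.linftyOpNormedRing Matrix.linftyOpNormedAlgebra


attribute [local instance] Matrix.linftyOpNormedRing Matrix.linftyOpNormedAlgebra

variable {d : ℕ}

private def EntNN (A : Matrix (Fin d) (Fin d) ℝ) : Prop := ∀ i j, 0 ≤ A i j

private lemma EntNN.mul {A B : Matrix (Fin d) (Fin d) ℝ} (hA : EntNN A) (hB : EntNN B) :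
    EntNN (A * B) := fun i j => by
  rw [Matrix.mul_apply]
  exact Finset.sum_nonneg fun k _ => mul_nonneg (hA i k) (hB k j)

private lemma EntNN.pow {A : Matrix (Fin d) (Fin d) ℝ} (hA : EntNN A) (k : ℕ) :
    EntNN (A ^ k) := by
  induction k with
  | zero =>
    intro i j
    rw [pow_zero]
    by_cases h : i = j <;> simp [Matrix.one_apply, h]
  | succ k ih =>
    rw [pow_succ]
    exact ih.mul hA

private lemma EntNN.smul {c : ℝ} (hc : 0 ≤ c) {A : Matrix (Fin d) (Fin d) ℝ} (hA : EntNN A) :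
    EntNN (c • A) := fun i j => by
  simpa using mul_nonneg hc (hA i j)

private lemma EntNN.tsum {f : ℕ → Matrix (Fin d) (Fin d) ℝ} (hs : Summable f)
    (h : ∀ k, EntNN (f k)) : EntNN (∑' k, f k) := by
  intro i j
  classical
  let e : Matrix (Fin d) (Fin d) ℝ →ₗ[ℝ] ℝ :=
    { toFun := fun A => A i j, map_add' := fun _ _ => rfl, map_smul' := fun _ _ => rfl }
  let E : Matrix (Fin d) (Fin d) ℝ →L[ℝ] ℝ := LinearMap.toContinuousLinearMap e
  have hE : E (∑' k, f k) = ∑' k, E (f k) := E.map_tsum hs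
  have : (∑' k, f k) i j = ∑' k, f k i j := hE
  rw [this]
  exact tsum_nonneg fun k => h k i j

private lemma entnn_step {Q : Matrix (Fin d) (Fin d) ℝ} {s t : ℝ}
    (ht : IsUnit (t • (1 : Matrix (Fin d) (Fin d) ℝ) - Q))
    (hst : s ≤ t)
    (hgt : EntNN (Ring.inverse (t • (1 : Matrix (Fin d) (Fin d) ℝ) - Q)))
    (hsm : (t - s) * ‖Ring.inverse (t • (1 : Matrix (Fin d) (Fin d) ℝ) - Q)‖ < 1) :
    EntNN (Ring.inverse (s • (1 : Matrix (Fin d) (Fin d) ℝ) - Q)) := by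
  set A : Matrix (Fin d) (Fin d) ℝ := t • 1 - Q with hA
  set g := Ring.inverse A with hgdef
  set c := t - s with hc
  have hcn : 0 ≤ c := sub_nonneg.2 hst
  have hnorm : ‖c • g‖ < 1 := by
    rw [norm_smul, Real.norm_eq_abs, abs_of_nonneg hcn]; exact hsm
  have hAg : A * g = 1 := Ring.mul_inverse_cancel A ht
  have hgA : g * A = 1 := Ring.inverse_mul_cancel A ht
  have hcomm : Commute A (1 - c • g) := by
    refine (Commute.one_right A).sub_right ?_
    show A * (c • g) = (c • g) * A
    rw [mul_smul_comm, smul_mul_assoc, hAg, hgA]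
  have key : s • (1 : Matrix (Fin d) (Fin d) ℝ) - Q = A * (1 - c • g) := by
    rw [mul_sub, mul_one, mul_smul_comm, hAg, hA, hc, sub_smul]
    abel
  have h2 : Ring.inverse (s • (1 : Matrix (Fin d) (Fin d) ℝ) - Q)
      = Ring.inverse (1 - c • g) * g := by
    rw [key, Ring.mul_inverse_rev' hcomm, hgdef]
  rw [h2, ← geom_series_eq_inverse _ hnorm]
  exact (EntNN.tsum (summable_geometric_of_norm_lt_one hnorm)
    (fun k => (EntNN.smul hcn hgt).pow k)).mul hgt

private lemma inv_one_sub_entnn (Q : Matrix (Fin d) (Fin d) ℝ) (hQ : EntNN Q)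
    (hU : ∀ t : ℝ, 1 ≤ t → IsUnit (t • (1 : Matrix (Fin d) (Fin d) ℝ) - Q)) :
    EntNN (1 - Q)⁻¹ := by
  classical
  set t0 : ℝ := ‖Q‖ + 1 with ht0
  have ht01 : (1 : ℝ) ≤ t0 := by simp only [ht0]; linarith [norm_nonneg Q]
  have ht0pos : (0 : ℝ) < t0 := by linarith
  have hB : ‖t0⁻¹ • Q‖ < 1 := by
    rw [norm_smul, Real.norm_eq_abs, abs_of_pos (inv_pos.2 ht0pos)]
    rw [inv_mul_lt_one₀ ht0pos]
    simp only [ht0]; linarith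
  have hbase : EntNN (Ring.inverse (t0 • (1 : Matrix (Fin d) (Fin d) ℝ) - Q)) := by
    have hfac : t0 • (1 : Matrix (Fin d) (Fin d) ℝ) - Q = t0 • (1 - t0⁻¹ • Q) := by
      rw [smul_sub, smul_smul, mul_inv_cancel₀ ht0pos.ne', one_smul]
    have hSnn : EntNN (Ring.inverse ((1 : Matrix (Fin d) (Fin d) ℝ) - t0⁻¹ • Q)) := by
      rw [← geom_series_eq_inverse _ hB]
      exact EntNN.tsum (summable_geometric_of_norm_lt_one hB)
        (fun k => (EntNN.smul (by positivity) hQ).pow k)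
    have hfac2 : t0 • ((1 : Matrix (Fin d) (Fin d) ℝ) - t0⁻¹ • Q)
        = (t0 • (1 : Matrix (Fin d) (Fin d) ℝ)) * (1 - t0⁻¹ • Q) := by
      rw [smul_mul_assoc, one_mul]
    have hinv1 : Ring.inverse (t0 • (1 : Matrix (Fin d) (Fin d) ℝ))
        = t0⁻¹ • (1 : Matrix (Fin d) (Fin d) ℝ) := by
      have : (t0 • (1 : Matrix (Fin d) (Fin d) ℝ)) * (t0⁻¹ • 1) = 1 := by
        rw [smul_mul_assoc, one_mul, smul_smul, mul_inv_cancel₀ ht0pos.ne', one_smul]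
      have h2 : (t0⁻¹ • (1 : Matrix (Fin d) (Fin d) ℝ)) * (t0 • 1) = 1 := by
        rw [smul_mul_assoc, one_mul, smul_smul, inv_mul_cancel₀ ht0pos.ne', one_smul]
      exact Ring.inverse_unit ⟨t0 • 1, t0⁻¹ • 1, this, h2⟩
    have hcomm : Commute (t0 • (1 : Matrix (Fin d) (Fin d) ℝ)) (1 - t0⁻¹ • Q) := by
      show _ * _ = _ * _
      rw [smul_mul_assoc, mul_smul_comm, one_mul, mul_one]
    rw [hfac, hfac2, Ring.mul_inverse_rev' hcomm, hinv1, mul_smul_comm, mul_one]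
    exact EntNN.smul (by positivity) hSnn
  obtain ⟨C, hC⟩ : ∃ C, ∀ x ∈ Set.Icc (1:ℝ) t0,
      ‖Ring.inverse (x • (1 : Matrix (Fin d) (Fin d) ℝ) - Q)‖ ≤ C := by
    have hcont : ContinuousOn
        (fun x : ℝ => Ring.inverse (x • (1 : Matrix (Fin d) (Fin d) ℝ) - Q)) (Set.Icc 1 t0) := by
      intro x hx
      have h1 : ContinuousAt (fun x : ℝ => x • (1 : Matrix (Fin d) (Fin d) ℝ) - Q) x :=
        ((continuous_id.smul continuous_const).sub continuous_const).continuousAt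
      have hux := hU x hx.1
      have h2 : ContinuousAt Ring.inverse (x • (1 : Matrix (Fin d) (Fin d) ℝ) - Q) := by
        have := NormedRing.inverse_continuousAt hux.unit
        rwa [hux.unit_spec] at this
      exact (ContinuousAt.comp (g := Ring.inverse)
        (f := fun x : ℝ => x • (1 : Matrix (Fin d) (Fin d) ℝ) - Q) h2 h1).continuousWithinAt
    exact isCompact_Icc.exists_bound_of_continuousOn hcont
  have hC0 : 0 ≤ C := le_trans (norm_nonneg _) (hC t0 ⟨ht01, le_rfl⟩)
  set δ : ℝ := 1 / (2 * (C + 1)) with hδdef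
  have hδ : 0 < δ := by rw [hδdef]; positivity
  have main : ∀ k : ℕ, ∀ t : ℝ, 1 ≤ t → t ≤ t0 → t0 - t ≤ k * δ →
      EntNN (Ring.inverse (t • (1 : Matrix (Fin d) (Fin d) ℝ) - Q)) := by
    intro k
    induction k with
    | zero =>
      intro t h1 h2 h3
      simp only [Nat.cast_zero, zero_mul] at h3
      have : t = t0 := le_antisymm h2 (by linarith)
      rw [this]; exact hbase
    | succ k ih =>
      intro t h1 h2 h3
      by_cases hk : t0 - t ≤ k * δ
      · exact ih t h1 h2 hk
      · push_neg at hk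
        push_cast at h3
        set t' := min (t + δ) t0 with ht'
        have h1' : 1 ≤ t' := le_min (by linarith) ht01
        have h2' : t' ≤ t0 := min_le_right _ _
        have h3' : t0 - t' ≤ k * δ := by
          by_cases hc2 : t + δ ≤ t0
          · rw [ht', min_eq_left hc2]; linarith
          · rw [ht', min_eq_right (by linarith)]
            have : (0:ℝ) ≤ k * δ := by positivity
            linarith
        have hgt' := ih t' h1' h2' h3'
        have htt' : t ≤ t' := le_min (by linarith) h2
        refine entnn_step (hU t' h1') htt' hgt' ?_
        have hb : ‖Ring.inverse (t' • (1 : Matrix (Fin d) (Fin d) ℝ) - Q)‖ ≤ C :=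
          hC t' ⟨h1', h2'⟩
        have hd : t' - t ≤ δ := by
          have := min_le_left (t + δ) t0
          rw [← ht'] at this; linarith
        calc (t' - t) * ‖Ring.inverse (t' • (1 : Matrix (Fin d) (Fin d) ℝ) - Q)‖
            ≤ δ * C := mul_le_mul hd hb (norm_nonneg _) hδ.le
          _ < 1 := by
              rw [hδdef, div_mul_eq_mul_div, one_mul, div_lt_one (by linarith)]
              linarith
  obtain ⟨k, hk⟩ := exists_nat_ge ((t0 - 1) / δ)
  have hfin := main k 1 le_rfl ht01 (by
    have := (div_le_iff₀ hδ).1 hk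
    linarith)
  rw [one_smul] at hfin
  rw [Matrix.nonsing_inv_eq_ringInverse]
  exact hfin


variable {d : ℕ}

private lemma isUnit_smul_one_sub_transpose (P : Matrix (Fin d) (Fin d) ℝ)
    (hspec : spectralRadius ℝ P < 1) (t : ℝ) (ht : 1 ≤ t) :
    IsUnit (t • (1 : Matrix (Fin d) (Fin d) ℝ) - Pᵀ) := by
  have hmem : t ∉ spectrum ℝ P := by
    intro hmem
    have h1 : (‖t‖₊ : ENNReal) ≤ spectralRadius ℝ P :=
      le_iSup₂ (f := fun k (_ : k ∈ spectrum ℝ P) => (‖k‖₊ : ENNReal)) t hmem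
    have h0 : (1 : ℝ) ≤ ‖t‖ := by
      rw [Real.norm_eq_abs]; exact le_trans ht (le_abs_self t)
    have h2 : (1 : ENNReal) ≤ (‖t‖₊ : ENNReal) := by
      rw [← ENNReal.coe_one, ENNReal.coe_le_coe]
      exact_mod_cast h0
    exact absurd hspec (not_lt.2 (le_trans h2 h1))
  have hP : IsUnit (t • (1 : Matrix (Fin d) (Fin d) ℝ) - P) := by
    have := spectrum.notMem_iff.mp hmem
    rwa [Algebra.algebraMap_eq_smul_one] at this
  rw [Matrix.isUnit_iff_isUnit_det] at hP ⊢
  have heq : (t • (1 : Matrix (Fin d) (Fin d) ℝ) - Pᵀ)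
      = (t • (1 : Matrix (Fin d) (Fin d) ℝ) - P)ᵀ := by
    rw [Matrix.transpose_sub, Matrix.transpose_smul, Matrix.transpose_one]
  rw [heq, Matrix.det_transpose]
  exact hP


end Stmt9Aux

theorem stmt_9 {d : ℕ} (P : Matrix (Fin d) (Fin d) ℝ)
    (hdiag : ∀ i, P i i = 0) (hnonneg : ∀ i j, 0 ≤ P i j)
    (hspec : spectralRadius ℝ P < 1)
    (n : ℕ) (hn : 1 ≤ n)
    (a : Fin d → ℝ) (ha : ∀ i, 0 ≤ a i) (u y z v w : ℕ → Fin d → ℝ)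
    (hSP : IsSPSol (1 - Pᵀ) a u y z)
    (hdual : IsSPSol (1 - Pᵀ)⁻¹ 0
      (fun k => -((1 - Pᵀ)⁻¹ *ᵥ u (n + 1 - k))) v w)
    (hruin : ∀ i, 0 < y n i - y (n - 1) i) :
    (∀ k, 1 ≤ k → k ≤ n → ∀ i, 0 < w k i) ∧
    (∀ i, ((1 - Pᵀ)⁻¹ *ᵥ a) i < w n i) := by
  classical
  set R : Matrix (Fin d) (Fin d) ℝ := 1 - Pᵀ with hR
  obtain ⟨hy0, hz0, hstep⟩ := hSP
  obtain ⟨hv0, hw0, hdstep⟩ := hdual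
  have hUnit : ∀ t : ℝ, 1 ≤ t → IsUnit (t • (1 : Matrix (Fin d) (Fin d) ℝ) - Pᵀ) :=
    isUnit_smul_one_sub_transpose P hspec
  have hRunit : IsUnit R := by
    have := hUnit 1 le_rfl
    rwa [one_smul] at this
  have hRdet : IsUnit R.det := (Matrix.isUnit_iff_isUnit_det R).1 hRunit
  have hRiNN : ∀ i j, 0 ≤ R⁻¹ i j :=
    inv_one_sub_entnn Pᵀ (fun i j => hnonneg j i) hUnit
  have hRiR : ∀ x : Fin d → ℝ, R⁻¹ *ᵥ (R *ᵥ x) = x := by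
    intro x
    rw [Matrix.mulVec_mulVec, Matrix.nonsing_inv_mul _ hRdet, Matrix.one_mulVec]
  have hmvNN : ∀ x : Fin d → ℝ, (∀ i, 0 ≤ x i) → ∀ i, 0 ≤ (R⁻¹ *ᵥ x) i := by
    intro x hx i
    simp only [Matrix.mulVec, dotProduct]
    exact Finset.sum_nonneg fun j _ => mul_nonneg (hRiNN i j) (hx j)
  -- monotonicity of y
  have hyinc : ∀ m : ℕ, ∀ i, y m i ≤ y (m + 1) i := by
    intro m i
    have h := (hstep (m + 1) (by omega)).2.2.1 i
    simp only [Nat.add_sub_cancel] at h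
    linarith
  have hymono : ∀ m' m : ℕ, m ≤ m' → ∀ i, y m i ≤ y m' i := by
    intro m'
    induction m' with
    | zero => intro m h i; have : m = 0 := by omega
              subst this; exact le_rfl
    | succ k ih =>
      intro m h i
      rcases Nat.eq_or_lt_of_le h with h1 | h1
      · exact h1 ▸ le_rfl
      · exact le_trans (ih m (by omega) i) (hyinc k i)
  -- nonnegativity of v
  have hvinc : ∀ m : ℕ, ∀ i, v m i ≤ v (m + 1) i := by
    intro m i
    have h := (hdstep (m + 1) (by omega)).2.2.1 i
    simp only [Nat.add_sub_cancel] at h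
    linarith
  have hvNN : ∀ m : ℕ, ∀ i, 0 ≤ v m i := by
    intro m
    induction m with
    | zero => intro i; rw [hv0]; exact le_rfl
    | succ k ih => intro i; exact le_trans (ih i) (hvinc k i)
  -- nonnegativity of z
  have hzNN : ∀ m : ℕ, ∀ i, 0 ≤ z m i := by
    intro m i
    cases m with
    | zero => rw [hz0]; exact ha i
    | succ k => exact (hstep (k + 1) (by omega)).2.1 i
  -- telescoping of the primal
  have hzsum : ∀ m : ℕ, z m = a + (∑ j ∈ Finset.Ioc 0 m, u j) + R *ᵥ y m := by
    intro m
    induction m with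
    | zero => simp [hz0, hy0]
    | succ k ih =>
      have hs := (hstep (k + 1) (by omega)).1
      simp only [Nat.add_sub_cancel] at hs
      rw [hs, ih, Finset.sum_Ioc_succ_top (Nat.zero_le _), Matrix.mulVec_sub]
      abel
  -- telescoping of the dual
  have hwsum : ∀ m : ℕ, w m = (∑ ℓ ∈ Finset.Ioc 0 m, -(R⁻¹ *ᵥ u (n + 1 - ℓ))) + R⁻¹ *ᵥ v m := by
    intro m
    induction m with
    | zero => simp [hw0, hv0]
    | succ k ih =>
      have hs := (hdstep (k + 1) (by omega)).1
      simp only [Nat.add_sub_cancel] at hs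
      rw [hs, ih, Finset.sum_Ioc_succ_top (Nat.zero_le _), Matrix.mulVec_sub]
      abel
  -- z n = 0
  have hzn0 : z n = (0 : Fin d → ℝ) := by
    have hdot := (hstep n hn).2.2.2
    funext i
    simp only [dotProduct, Pi.sub_apply] at hdot
    have hterm : ∀ j ∈ Finset.univ, (0:ℝ) ≤ z n j * (y n j - y (n - 1) j) :=
      fun j _ => mul_nonneg (hzNN n j) (hruin j).le
    have h0 := (Finset.sum_eq_zero_iff_of_nonneg hterm).1 hdot i (Finset.mem_univ i)
    have := (mul_eq_zero.1 h0).resolve_right (ne_of_gt (hruin i))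
    simpa using this
  have hyneg : (0 : Fin d → ℝ) = a + (∑ j ∈ Finset.Ioc 0 n, u j) + R *ᵥ y n := by
    rw [← hzsum n, hzn0]
  -- key identity
  have hkey : ∀ k : ℕ, 1 ≤ k → k ≤ n →
      w k = (y n - y (n - k)) + R⁻¹ *ᵥ z (n - k) + R⁻¹ *ᵥ v k := by
    intro k hk1 hk2
    have S1 : (∑ ℓ ∈ Finset.Ioc 0 k, u (n + 1 - ℓ)) = ∑ j ∈ Finset.Ioc (n - k) n, u j := by
      apply Finset.sum_nbij' (i := fun ℓ => n + 1 - ℓ) (j := fun m => n + 1 - m)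
      · intro ℓ hℓ
        simp only [Finset.mem_Ioc] at hℓ ⊢
        omega
      · intro m hm
        simp only [Finset.mem_Ioc] at hm ⊢
        omega
      · intro ℓ hℓ
        simp only [Finset.mem_Ioc] at hℓ
        omega
      · intro m hm
        simp only [Finset.mem_Ioc] at hm
        omega
      · intro ℓ hℓ
        rfl
    have S2 : (∑ j ∈ Finset.Ioc 0 (n - k), u j) + (∑ j ∈ Finset.Ioc (n - k) n, u j)
        = ∑ j ∈ Finset.Ioc 0 n, u j :=
      Finset.sum_Ioc_consecutive _ (Nat.zero_le _) (Nat.sub_le n k)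
    have hznk := hzsum (n - k)
    have hSu : (∑ j ∈ Finset.Ioc (n - k) n, u j)
        = -(R *ᵥ (y n - y (n - k))) - z (n - k) := by
      have e1 : (∑ j ∈ Finset.Ioc 0 n, u j) = -a - R *ᵥ y n := by
        have := hyneg
        rw [eq_comm] at this
        rw [eq_sub_iff_add_eq]
        calc (∑ j ∈ Finset.Ioc 0 n, u j) + R *ᵥ y n
            = -a + (a + (∑ j ∈ Finset.Ioc 0 n, u j) + R *ᵥ y n) := by abel
          _ = -a := by rw [this]; abel
      have e2 : (∑ j ∈ Finset.Ioc 0 (n - k), u j) = z (n - k) - a - R *ᵥ y (n - k) := by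
        rw [hznk]; abel
      have e3 : (∑ j ∈ Finset.Ioc (n - k) n, u j)
          = (∑ j ∈ Finset.Ioc 0 n, u j) - (∑ j ∈ Finset.Ioc 0 (n - k), u j) := by
        rw [← S2]; abel
      rw [e3, e1, e2, Matrix.mulVec_sub]
      abel
    have hlin : (∑ ℓ ∈ Finset.Ioc 0 k, -(R⁻¹ *ᵥ u (n + 1 - ℓ)))
        = -(R⁻¹ *ᵥ (∑ ℓ ∈ Finset.Ioc 0 k, u (n + 1 - ℓ))) := by
      have hms : (R⁻¹ *ᵥ (∑ ℓ ∈ Finset.Ioc 0 k, u (n + 1 - ℓ)))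
          = ∑ ℓ ∈ Finset.Ioc 0 k, R⁻¹ *ᵥ u (n + 1 - ℓ) := by
        simp only [← Matrix.mulVecLin_apply]
        exact map_sum (Matrix.mulVecLin R⁻¹) _ _
      rw [hms, Finset.sum_neg_distrib]
    rw [hwsum k, hlin, S1, hSu, Matrix.mulVec_sub, Matrix.mulVec_neg, hRiR]
    abel
  constructor
  · intro k hk1 hk2 i
    have hk := hkey k hk1 hk2
    have hki : w k i = (y n i - y (n - k) i) + (R⁻¹ *ᵥ z (n - k)) i + (R⁻¹ *ᵥ v k) i := by
      rw [hk]; rfl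
    have hmono := hymono (n - 1) (n - k) (by omega) i
    have h1 := hruin i
    have h2 := hmvNN (z (n - k)) (hzNN (n - k)) i
    have h3 := hmvNN (v k) (hvNN k) i
    rw [hki]; linarith
  · intro i
    have hk := hkey n hn le_rfl
    simp only [Nat.sub_self] at hk
    have hki : w n i = (y n i - y 0 i) + (R⁻¹ *ᵥ z 0) i + (R⁻¹ *ᵥ v n) i := by
      rw [hk]; rfl
    rw [hz0] at hki
    have hy0i : y 0 i = 0 := by rw [hy0]; rfl
    have hmono := hymono (n - 1) 0 (Nat.zero_le _) i
    have h1 := hruin i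
    have h3 := hmvNN (v n) (hvNN n) i
    rw [hki, hy0i]
    linarith
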